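/- Let F : [0,T] → ℝ be C², strictly increasing, with interior point t₀ where F'(t₀) = 0, F''(t₀)=0, and F'''(t₀) exists with F'''(t₀) > 0. Then the graph of v = F' ∘ F⁻¹ has a vertical half-tangent at x₀ = F(t₀): the one-sided difference quotients (v(x₀+h) − v(x₀))/h tend to +∞ as h → 0⁺ and to −∞ as h → 0⁻. -/

import Mathlib

open Set Filter

set_option maxHeartbeats 2000000 in
/-- Vertical half-tangent (cusp) of `v = F' ∘ F⁻¹` at `x₀ = F t₀` : the
one-sided difference quotients tend to `+∞` as `h → 0⁺` and to `−∞` as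
`h → 0⁻`. -/
theorem stmt_5 (T : ℝ) (hT : 0 < T)
    (F F' F'' : ℝ → ℝ) (F₃ : ℝ)
    (hsm : StrictMonoOn F (Icc 0 T))
    (hd1 : ∀ t ∈ Icc 0 T, HasDerivWithinAt F (F' t) (Icc 0 T) t)
    (hd2 : ∀ t ∈ Icc 0 T, HasDerivWithinAt F' (F'' t) (Icc 0 T) t)
    (hF''cont : ContinuousOn F'' (Icc 0 T))
    (t₀ : ℝ) (ht₀ : t₀ ∈ Ioo 0 T) (hF't₀ : F' t₀ = 0) (hF''t₀ : F'' t₀ = 0)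
    (hd3 : HasDerivWithinAt F'' F₃ (Icc 0 T) t₀) (hF₃ : 0 < F₃)
    (Finv : ℝ → ℝ)
    (hFinvF : ∀ t ∈ Icc 0 T, Finv (F t) = t)
    (hFFinv : ∀ x ∈ Icc (F 0) (F T), F (Finv x) = x) :
    Tendsto (fun h : ℝ => (F' (Finv (F t₀ + h)) - F' (Finv (F t₀))) / h)
        (nhdsWithin 0 (Ioi 0)) atTop ∧
    Tendsto (fun h : ℝ => (F' (Finv (F t₀ + h)) - F' (Finv (F t₀))) / h)
        (nhdsWithin 0 (Iio 0)) atBot := by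
  obtain ⟨ht₀0, ht₀T⟩ := ht₀
  have ht₀' : t₀ ∈ Icc 0 T := ⟨le_of_lt ht₀0, le_of_lt ht₀T⟩
  have h0T : (0:ℝ) ∈ Icc 0 T := ⟨le_refl 0, le_of_lt hT⟩
  have hTT : T ∈ Icc 0 T := ⟨le_of_lt hT, le_refl T⟩
  have hFcont : ContinuousOn F (Icc 0 T) := fun t ht => (hd1 t ht).continuousWithinAt
  have hx₀lo : F 0 < F t₀ := hsm h0T ht₀' ht₀0
  have hx₀hi : F t₀ < F T := hsm ht₀' hTT ht₀T
  -- Finv maps [F0,FT] into [0,T]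
  have hFinv_mem : ∀ x ∈ Icc (F 0) (F T), Finv x ∈ Icc 0 T := by
    intro x hx
    obtain ⟨t, ht, hFt⟩ := intermediate_value_Icc (le_of_lt hT) hFcont hx
    rw [← hFt, hFinvF t ht]; exact ht
  have hFinvx₀ : Finv (F t₀) = t₀ := hFinvF t₀ ht₀'
  -- little-o estimate for F''
  have hlo := hasDerivWithinAt_iff_isLittleO.mp hd3
  rw [hF''t₀] at hlo
  have hlo24 := hlo.def (show (0:ℝ) < F₃/24 by linarith)
  rw [eventually_nhdsWithin_iff, Metric.eventually_nhds_iff] at hlo24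
  obtain ⟨δ, hδ, hB⟩ := hlo24
  -- quadratic estimate for F'
  have hA : ∀ t ∈ Icc 0 T, |t - t₀| < δ →
      |F' t - (F₃/2) * (t - t₀)^2| ≤ (F₃/24) * (t - t₀)^2 := by
    intro t ht hts
    set I : Set ℝ := Icc (min t₀ t) (max t₀ t) with hI
    have hIsub : I ⊆ Icc 0 T := by
      apply Icc_subset_Icc
      · exact le_min ht₀'.1 ht.1
      · exact max_le ht₀'.2 ht.2
    have habs : ∀ u ∈ I, |u - t₀| ≤ |t - t₀| := by
      intro u hu
      have l1 : min t₀ t ≤ u := hu.1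
      have l2 : u ≤ max t₀ t := hu.2
      rcases le_total t₀ t with h | h
      · rw [min_eq_left h] at l1; rw [max_eq_right h] at l2
        rw [abs_le, abs_of_nonneg (by linarith : (0:ℝ) ≤ t - t₀)]
        constructor <;> linarith
      · rw [min_eq_right h] at l1; rw [max_eq_left h] at l2
        rw [abs_le, abs_of_nonpos (by linarith : t - t₀ ≤ (0:ℝ))]
        constructor <;> linarith
    have hg : ∀ u ∈ I, HasDerivWithinAt (fun u => F' u - (F₃/2) * (u - t₀)^2)
        (F'' u - F₃ * (u - t₀)) I u := by
      intro u hu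
      have hpoly : HasDerivAt (fun u : ℝ => (F₃/2) * (u - t₀)^2)
          ((F₃/2) * (2 * (u - t₀)^1 * 1)) u :=
        (((hasDerivAt_id u).sub_const t₀).pow 2).const_mul (F₃/2)
      have := ((hd2 u (hIsub hu)).mono hIsub).sub hpoly.hasDerivWithinAt
      exact this.congr_deriv (by ring)
    have hgb : ∀ u ∈ I, ‖F'' u - F₃ * (u - t₀)‖ ≤ (F₃/24) * |t - t₀| := by
      intro u hu
      have h1 := hB (show dist u t₀ < δ by
        rw [Real.dist_eq]; exact lt_of_le_of_lt (habs u hu) hts) (hIsub hu)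
      simp only [sub_zero, smul_eq_mul] at h1
      calc ‖F'' u - F₃ * (u - t₀)‖ = ‖F'' u - (u - t₀) * F₃‖ := by ring_nf
        _ ≤ F₃ / 24 * ‖u - t₀‖ := h1
        _ ≤ F₃/24 * |t - t₀| := by
            rw [Real.norm_eq_abs]
            exact mul_le_mul_of_nonneg_left (habs u hu) (by linarith)
    have ht₀I : t₀ ∈ I := ⟨min_le_left _ _, le_max_left _ _⟩
    have htI : t ∈ I := ⟨min_le_right _ _, le_max_right _ _⟩
    have := Convex.norm_image_sub_le_of_norm_hasDerivWithin_le hg hgb (convex_Icc _ _) ht₀I htI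
    simp only [hF't₀, sub_self, ne_eq, OfNat.ofNat_ne_zero, not_false_eq_true, zero_pow,
      mul_zero, sub_zero, zero_sub, sub_neg_eq_add, Real.norm_eq_abs] at this
    calc |F' t - F₃/2 * (t - t₀)^2|
        ≤ F₃/24 * |t - t₀| * |t - t₀| := by
          convert this using 2 <;> ring
      _ = F₃/24 * (t - t₀)^2 := by rw [mul_assoc, ← abs_mul, ← sq, abs_of_nonneg (sq_nonneg _)]
  -- cubic estimate for F
  have hBb : ∀ t ∈ Icc 0 T, |t - t₀| < δ →
      |F t - F t₀ - (F₃/6) * (t - t₀)^3| ≤ (F₃/24) * |t - t₀|^3 := by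
    intro t ht hts
    set I : Set ℝ := Icc (min t₀ t) (max t₀ t) with hI
    have hIsub : I ⊆ Icc 0 T := by
      apply Icc_subset_Icc
      · exact le_min ht₀'.1 ht.1
      · exact max_le ht₀'.2 ht.2
    have habs : ∀ u ∈ I, |u - t₀| ≤ |t - t₀| := by
      intro u hu
      have l1 : min t₀ t ≤ u := hu.1
      have l2 : u ≤ max t₀ t := hu.2
      rcases le_total t₀ t with h | h
      · rw [min_eq_left h] at l1; rw [max_eq_right h] at l2
        rw [abs_le, abs_of_nonneg (by linarith : (0:ℝ) ≤ t - t₀)]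
        constructor <;> linarith
      · rw [min_eq_right h] at l1; rw [max_eq_left h] at l2
        rw [abs_le, abs_of_nonpos (by linarith : t - t₀ ≤ (0:ℝ))]
        constructor <;> linarith
    have hg : ∀ u ∈ I, HasDerivWithinAt (fun u => F u - (F₃/6) * (u - t₀)^3)
        (F' u - (F₃/2) * (u - t₀)^2) I u := by
      intro u hu
      have hpoly : HasDerivAt (fun u : ℝ => (F₃/6) * (u - t₀)^3)
          ((F₃/6) * (3 * (u - t₀)^2 * 1)) u :=
        (((hasDerivAt_id u).sub_const t₀).pow 3).const_mul (F₃/6)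
      have := ((hd1 u (hIsub hu)).mono hIsub).sub hpoly.hasDerivWithinAt
      exact this.congr_deriv (by ring)
    have hgb : ∀ u ∈ I, ‖F' u - (F₃/2) * (u - t₀)^2‖ ≤ (F₃/24) * |t - t₀|^2 := by
      intro u hu
      have h1 := hA u (hIsub hu) (lt_of_le_of_lt (habs u hu) hts)
      rw [Real.norm_eq_abs]
      refine h1.trans ?_
      have h2 : (u - t₀)^2 ≤ |t - t₀|^2 := by
        rw [← sq_abs (u - t₀)]
        exact pow_le_pow_left₀ (abs_nonneg _) (habs u hu) 2
      nlinarith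
    have ht₀I : t₀ ∈ I := ⟨min_le_left _ _, le_max_left _ _⟩
    have htI : t ∈ I := ⟨min_le_right _ _, le_max_right _ _⟩
    have key := Convex.norm_image_sub_le_of_norm_hasDerivWithin_le hg hgb (convex_Icc _ _) ht₀I htI
    simp only [sub_self, ne_eq, OfNat.ofNat_ne_zero, not_false_eq_true, zero_pow,
      mul_zero, sub_zero, Real.norm_eq_abs] at key
    calc |F t - F t₀ - F₃/6 * (t - t₀)^3|
        ≤ F₃/24 * |t - t₀|^2 * |t - t₀| := by
          convert key using 2 <;> ring
      _ = F₃/24 * |t - t₀|^3 := by ring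
  -- right side in t
  have hQpos : Tendsto (fun t => F' t / (F t - F t₀)) (nhdsWithin t₀ (Ioi t₀)) atTop := by
    have hbaseR : Tendsto (fun t : ℝ => (t - t₀)⁻¹) (nhdsWithin t₀ (Ioi t₀)) atTop := by
      apply tendsto_inv_nhdsGT_zero.comp
      apply tendsto_nhdsWithin_iff.mpr
      constructor
      · have h : Tendsto (fun t : ℝ => t - t₀) (nhdsWithin t₀ (Ioi t₀)) (nhds (t₀ - t₀)) :=
          ((continuous_sub_right t₀).tendsto t₀).mono_left nhdsWithin_le_nhds
        simpa using h
      · filter_upwards [self_mem_nhdsWithin] with t ht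
        simpa [sub_pos] using ht
    apply tendsto_atTop_mono' _ _ hbaseR
    have hb : t₀ ∈ Ico t₀ (min T (t₀ + δ)) := ⟨le_refl _, lt_min ht₀T (by linarith)⟩
    filter_upwards [Ioo_mem_nhdsGT_of_mem hb] with t ht
    have ht1 : t₀ < t := ht.1
    have ht2 : t < min T (t₀ + δ) := ht.2
    have htIcc : t ∈ Icc 0 T := ⟨by linarith, le_of_lt (lt_of_lt_of_le ht2 (min_le_left _ _))⟩
    have hts : |t - t₀| < δ := by
      rw [abs_of_pos (by linarith : 0 < t - t₀)]
      have := lt_of_lt_of_le ht2 (min_le_right _ _); linarith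
    have hN := abs_le.mp (hA t htIcc hts)
    have hD := abs_le.mp (hBb t htIcc hts)
    set s := t - t₀ with hs
    have hspos : 0 < s := by linarith
    rw [abs_of_pos hspos] at hD
    have hDpos : 0 < F t - F t₀ := sub_pos.mpr (hsm ht₀' htIcc ht1)
    rw [le_div_iff₀ hDpos]
    have hinv : s⁻¹ * s = 1 := inv_mul_cancel₀ hspos.ne'
    have hinvpos : 0 < s⁻¹ := inv_pos.mpr hspos
    have hDle : F t - F t₀ ≤ (5/24) * F₃ * s^3 := by nlinarith [hD.2]
    have hNge : (11/24) * F₃ * s^2 ≤ F' t := by nlinarith [hN.1]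
    have step : s⁻¹ * (F t - F t₀) ≤ (5/24) * F₃ * s^2 := by
      have := mul_le_mul_of_nonneg_left hDle hinvpos.le
      calc s⁻¹ * (F t - F t₀) ≤ s⁻¹ * ((5/24) * F₃ * s^3) := this
        _ = (5/24) * F₃ * s^2 * (s⁻¹ * s) := by ring
        _ = (5/24) * F₃ * s^2 := by rw [hinv, mul_one]
    nlinarith [sq_nonneg s]
  have hQneg : Tendsto (fun t => F' t / (F t - F t₀)) (nhdsWithin t₀ (Iio t₀)) atBot := by
    have hbaseL : Tendsto (fun t : ℝ => (t - t₀)⁻¹) (nhdsWithin t₀ (Iio t₀)) atBot := by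
      have h1 : Tendsto (fun t : ℝ => (t₀ - t)⁻¹) (nhdsWithin t₀ (Iio t₀)) atTop := by
        apply tendsto_inv_nhdsGT_zero.comp
        apply tendsto_nhdsWithin_iff.mpr
        constructor
        · have h : Tendsto (fun t : ℝ => t₀ - t) (nhdsWithin t₀ (Iio t₀)) (nhds (t₀ - t₀)) :=
            ((continuous_sub_left t₀).tendsto t₀).mono_left nhdsWithin_le_nhds
          simpa using h
        · filter_upwards [self_mem_nhdsWithin] with t ht
          simpa [sub_pos] using ht
      have h2 := (tendsto_neg_atTop_atBot).comp h1
      refine h2.congr fun t => ?_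
      simp [Function.comp, ← inv_neg]
    apply tendsto_atBot_mono' _ _ hbaseL
    have hb : t₀ ∈ Ioc (max 0 (t₀ - δ)) t₀ := ⟨by simp [ht₀0, hδ], le_refl _⟩
    filter_upwards [Ioo_mem_nhdsLT_of_mem hb] with t ht
    have ht1 : max 0 (t₀ - δ) < t := ht.1
    have ht2 : t < t₀ := ht.2
    have htIcc : t ∈ Icc 0 T := ⟨le_of_lt (lt_of_le_of_lt (le_max_left _ _) ht1), by linarith⟩
    have hts : |t - t₀| < δ := by
      rw [abs_of_neg (by linarith : t - t₀ < 0)]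
      have := lt_of_le_of_lt (le_max_right _ _) ht1; linarith
    have hN := abs_le.mp (hA t htIcc hts)
    have hD := abs_le.mp (hBb t htIcc hts)
    set s := t - t₀ with hs
    have hsneg : s < 0 := by linarith
    rw [abs_of_neg hsneg] at hD
    have hDneg : F t - F t₀ < 0 := sub_neg.mpr (hsm htIcc ht₀' ht2)
    rw [div_le_iff_of_neg hDneg]
    have hinv : s⁻¹ * s = 1 := inv_mul_cancel₀ hsneg.ne
    have hinvneg : s⁻¹ < 0 := inv_neg''.mpr hsneg
    have hDge : (5/24) * F₃ * s^3 ≤ F t - F t₀ := by nlinarith [hD.1]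
    have hNge : (11/24) * F₃ * s^2 ≤ F' t := by nlinarith [hN.1]
    have step : s⁻¹ * (F t - F t₀) ≤ (5/24) * F₃ * s^2 := by
      have := mul_le_mul_of_nonpos_left hDge hinvneg.le
      calc s⁻¹ * (F t - F t₀) ≤ s⁻¹ * ((5/24) * F₃ * s^3) := this
        _ = (5/24) * F₃ * s^2 * (s⁻¹ * s) := by ring
        _ = (5/24) * F₃ * s^2 := by rw [hinv, mul_one]
    nlinarith [sq_nonneg s]
  -- key inverse bounds
  have hkeyR : ∀ b, t₀ < b → b ≤ T → ∀ h : ℝ, 0 < h → h < F b - F t₀ →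
      t₀ < Finv (F t₀ + h) ∧ Finv (F t₀ + h) < b := by
    intro b hb1 hb2 h hh1 hh2
    have hbIcc : b ∈ Icc 0 T := ⟨by linarith, hb2⟩
    have hFb : F b ≤ F T := (hsm.monotoneOn) hbIcc hTT hb2
    have hx : F t₀ + h ∈ Icc (F 0) (F T) := ⟨by linarith, by linarith⟩
    have hmem := hFinv_mem _ hx
    have hFx := hFFinv _ hx
    constructor
    · by_contra hc
      push_neg at hc
      have := (hsm.monotoneOn) hmem ht₀' hc
      rw [hFx] at this; linarith
    · by_contra hc
      push_neg at hc
      have := (hsm.monotoneOn) hbIcc hmem hc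
      rw [hFx] at this; linarith
  have hkeyL : ∀ a, a < t₀ → 0 ≤ a → ∀ h : ℝ, h < 0 → F a - F t₀ < h →
      Finv (F t₀ + h) < t₀ ∧ a < Finv (F t₀ + h) := by
    intro a ha1 ha2 h hh1 hh2
    have haIcc : a ∈ Icc 0 T := ⟨ha2, by linarith⟩
    have hFa : F 0 ≤ F a := (hsm.monotoneOn) h0T haIcc ha2
    have hx : F t₀ + h ∈ Icc (F 0) (F T) := ⟨by linarith, by linarith⟩
    have hmem := hFinv_mem _ hx
    have hFx := hFFinv _ hx
    constructor
    · by_contra hc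
      push_neg at hc
      have := (hsm.monotoneOn) ht₀' hmem hc
      rw [hFx] at this; linarith
    · by_contra hc
      push_neg at hc
      have := (hsm.monotoneOn) hmem haIcc hc
      rw [hFx] at this; linarith
  -- Finv tendsto, right
  have hIR : Tendsto (fun h : ℝ => Finv (F t₀ + h)) (nhdsWithin 0 (Ioi 0))
      (nhdsWithin t₀ (Ioi t₀)) := by
    rw [tendsto_nhdsWithin_iff]
    have hIoi : ∀ᶠ h : ℝ in nhdsWithin 0 (Ioi 0), Finv (F t₀ + h) ∈ Ioi t₀ := by
      filter_upwards [Ioo_mem_nhdsGT_of_mem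
        (show (0:ℝ) ∈ Ico 0 (F T - F t₀) by exact ⟨le_refl _, by linarith⟩)] with h hh
      exact (hkeyR T ht₀T le_rfl h hh.1 hh.2).1
    refine ⟨tendsto_order.mpr ⟨?_, ?_⟩, hIoi⟩
    · intro a ha
      filter_upwards [hIoi] with h hh
      exact lt_trans ha hh
    · intro b hb
      set b' := min b T with hb'
      have hb'1 : t₀ < b' := lt_min hb ht₀T
      have hb'2 : b' ≤ T := min_le_right _ _
      have hFb' : F t₀ < F b' := hsm ht₀' ⟨by linarith, hb'2⟩ hb'1
      filter_upwards [Ioo_mem_nhdsGT_of_mem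
        (show (0:ℝ) ∈ Ico 0 (F b' - F t₀) by exact ⟨le_refl _, by linarith⟩)] with h hh
      exact lt_of_lt_of_le (hkeyR b' hb'1 hb'2 h hh.1 hh.2).2 (min_le_left _ _)
  -- Finv tendsto, left
  have hIL : Tendsto (fun h : ℝ => Finv (F t₀ + h)) (nhdsWithin 0 (Iio 0))
      (nhdsWithin t₀ (Iio t₀)) := by
    rw [tendsto_nhdsWithin_iff]
    have hIio : ∀ᶠ h : ℝ in nhdsWithin 0 (Iio 0), Finv (F t₀ + h) ∈ Iio t₀ := by
      filter_upwards [Ioo_mem_nhdsLT_of_mem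
        (show (0:ℝ) ∈ Ioc (F 0 - F t₀) 0 by exact ⟨by linarith, le_refl _⟩)] with h hh
      exact (hkeyL 0 ht₀0 le_rfl h hh.2 hh.1).1
    refine ⟨tendsto_order.mpr ⟨?_, ?_⟩, hIio⟩
    · intro a ha
      set a' := max a 0 with ha'
      have ha'1 : a' < t₀ := max_lt ha ht₀0
      have ha'2 : (0:ℝ) ≤ a' := le_max_right _ _
      have hFa' : F a' < F t₀ := hsm ⟨ha'2, by linarith⟩ ht₀' ha'1
      filter_upwards [Ioo_mem_nhdsLT_of_mem
        (show (0:ℝ) ∈ Ioc (F a' - F t₀) 0 by exact ⟨by linarith, le_refl _⟩)] with h hh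
      exact lt_of_le_of_lt (le_max_left _ _) (hkeyL a' ha'1 ha'2 h hh.2 hh.1).2
    · intro b hb
      filter_upwards [hIio] with h hh
      exact lt_trans hh hb
  -- eventual equality on the right
  have heqR : ∀ᶠ h in nhdsWithin (0:ℝ) (Ioi 0),
      (F' (Finv (F t₀ + h)) - F' (Finv (F t₀))) / h = F' (Finv (F t₀ + h)) / (F (Finv (F t₀ + h)) - F t₀) := by
    filter_upwards [Ioo_mem_nhdsGT_of_mem (show (0:ℝ) ∈ Ico 0 (F T - F t₀) by
      exact ⟨le_refl 0, by linarith⟩)] with h hh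
    have hx : F t₀ + h ∈ Icc (F 0) (F T) := ⟨by linarith [hh.1, hx₀lo], by linarith [hh.2]⟩
    rw [hFinvx₀, hF't₀]
    simp only [sub_zero]
    rw [hFFinv _ hx]
    ring_nf
  have heqL : ∀ᶠ h in nhdsWithin (0:ℝ) (Iio 0),
      (F' (Finv (F t₀ + h)) - F' (Finv (F t₀))) / h = F' (Finv (F t₀ + h)) / (F (Finv (F t₀ + h)) - F t₀) := by
    filter_upwards [Ioo_mem_nhdsLT_of_mem (show (0:ℝ) ∈ Ioc (F 0 - F t₀) 0 by
      exact ⟨by linarith, le_refl 0⟩)] with h hh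
    have hx : F t₀ + h ∈ Icc (F 0) (F T) := ⟨by linarith [hh.1], by linarith [hh.2, hx₀hi]⟩
    rw [hFinvx₀, hF't₀]
    simp only [sub_zero]
    rw [hFFinv _ hx]
    ring_nf
  constructor
  · exact Tendsto.congr' (heqR.mono fun h hh => hh.symm) (hQpos.comp hIR)
  · exact Tendsto.congr' (heqL.mono fun h hh => hh.symm) (hQneg.comp hIL)
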